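/- For all z, z' in the hyperbolic upper half-plane ℍ, one has |dist(z, z') − (2·log M(z,z') − log(Im z) − log(Im z'))| ≤ log 4. -/

import Mathlib

set_option maxHeartbeats 1000000


open UpperHalfPlane

/-- The maximal height of the hyperbolic geodesic segment joining `z` and `z'` in the
upper half-plane, defined explicitly: if `Re z = Re z'` it is `max (Im z) (Im z')`;
otherwise, with `c` the centre on `ℝ` of the circle through `z, z'` orthogonal to `ℝ`
and `R` its radius, it is `R` when the top of the circle lies strictly between the two
points (i.e. `(Re z - c) * (Re z' - c) < 0`), and `max (Im z) (Im z')` otherwise. -/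
noncomputable def maxHeight (z z' : UpperHalfPlane) : ℝ :=
  if z.re = z'.re then max z.im z'.im
  else
    let c : ℝ := (‖(z : ℂ)‖ ^ 2 - ‖(z' : ℂ)‖ ^ 2) /
      (2 * (z.re - z'.re))
    let R : ℝ := ‖(z : ℂ) - (c : ℂ)‖
    if (z.re - c) * (z'.re - c) < 0 then R else max z.im z'.im

private lemma same_sign_sq_sub (a b : ℝ) (hab : 0 ≤ a * b) : (a-b)^2 ≤ |a^2 - b^2| := by
  rcases abs_cases (a^2 - b^2) with ⟨h, _⟩ | ⟨h, _⟩ <;> rw [h] <;>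
    nlinarith [sq_nonneg (a-b), sq_nonneg (a+b), sq_nonneg (a*b - a^2), sq_nonneg (a*b - b^2),
      mul_nonneg hab (sq_nonneg (a-b))]

private lemma maxHeight_bounds (z z' : ℍ) :
    0 < maxHeight z z' ∧
    (z.re - z'.re)^2 + z.im^2 + z'.im^2 ≤ 4 * (maxHeight z z')^2 ∧
    (maxHeight z z')^2 ≤ 2 * ((z.re - z'.re)^2 + z.im^2 + z'.im^2) := by
  have hy : 0 < z.im := z.im_pos
  have hy' : 0 < z'.im := z'.im_pos
  by_cases h1 : z.re = z'.re
  · simp only [maxHeight, if_pos h1]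
    refine ⟨lt_max_iff.mpr (Or.inl hy), ?_, ?_⟩
    · have h2 := le_max_left z.im z'.im
      have h3 := le_max_right z.im z'.im
      rw [h1]
      nlinarith
    · rcases max_choice z.im z'.im with h | h <;> rw [h] <;> nlinarith
  · set c : ℝ := (‖(z : ℂ)‖ ^ 2 - ‖(z' : ℂ)‖ ^ 2) /
      (2 * (z.re - z'.re)) with hc
    set R : ℝ := ‖(z : ℂ) - (c : ℂ)‖ with hR
    have hM : maxHeight z z' =
        if (z.re - c) * (z'.re - c) < 0 then R else max z.im z'.im := by
      simp only [maxHeight, if_neg h1]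
      rfl
    have hd : z.re - z'.re ≠ 0 := sub_ne_zero.mpr h1
    have habs : ‖(z : ℂ)‖ ^ 2 = z.re^2 + z.im^2 := by
      rw [Complex.sq_norm, Complex.normSq_apply, coe_re, coe_im]; ring
    have habs' : ‖(z' : ℂ)‖ ^ 2 = z'.re^2 + z'.im^2 := by
      rw [Complex.sq_norm, Complex.normSq_apply, coe_re, coe_im]; ring
    have hc2 : c * (2*(z.re - z'.re)) = (z.re^2 + z.im^2) - (z'.re^2 + z'.im^2) := by
      rw [hc, habs, habs']; field_simp
    have hRz : R^2 = (z.re - c)^2 + z.im^2 := by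
      rw [hR, Complex.sq_norm, Complex.normSq_apply]
      simp [Complex.sub_re, Complex.sub_im, coe_re, coe_im]
      ring
    have hcirc : (z'.re - c)^2 + z'.im^2 = (z.re - c)^2 + z.im^2 := by nlinarith [hc2]
    by_cases h2 : (z.re - c) * (z'.re - c) < 0
    · rw [hM, if_pos h2]
      have hR0 : 0 ≤ R := norm_nonneg _
      have hRne : R ≠ 0 := by
        intro h0
        rw [h0] at hRz
        nlinarith
      refine ⟨hR0.lt_of_ne (Ne.symm hRne), ?_, ?_⟩
      · nlinarith [sq_nonneg ((z.re - c) + (z'.re - c))]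
      · nlinarith [sq_nonneg (z'.re - c)]
    · rw [hM, if_neg h2]
      push_neg at h2
      refine ⟨lt_max_iff.mpr (Or.inl hy), ?_, ?_⟩
      · have hkey := same_sign_sq_sub (z.re - c) (z'.re - c) h2
        have habsle : |(z.re - c)^2 - (z'.re - c)^2| ≤ (max z.im z'.im)^2 := by
          have h3 := le_max_left z.im z'.im
          have h4 := le_max_right z.im z'.im
          rcases abs_cases ((z.re - c)^2 - (z'.re - c)^2) with ⟨h, _⟩ | ⟨h, _⟩ <;> rw [h] <;>
            nlinarith
        have hxab : z.re - z'.re = (z.re - c) - (z'.re - c) := by ring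
        have h3 := le_max_left z.im z'.im
        have h4 := le_max_right z.im z'.im
        have h5 : (z.re - z'.re)^2 ≤ (max z.im z'.im)^2 := by
          rw [hxab]; exact hkey.trans habsle
        have h6 : z.im^2 ≤ (max z.im z'.im)^2 := by nlinarith
        have h7 : z'.im^2 ≤ (max z.im z'.im)^2 := by nlinarith
        linarith [sq_nonneg (max z.im z'.im)]
      · rcases max_choice z.im z'.im with h | h <;> rw [h] <;> nlinarith [sq_nonneg (z.re - z'.re)]

theorem dist_sub_log_maxHeight_le (z z' : UpperHalfPlane) :
    |dist z z' - (2 * Real.log (maxHeight z z') - Real.log z.im - Real.log z'.im)|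
      ≤ Real.log 4 := by
  obtain ⟨hM, hA, hB⟩ := maxHeight_bounds z z'
  have hy : 0 < z.im := z.im_pos
  have hy' : 0 < z'.im := z'.im_pos
  set M := maxHeight z z' with hMdef
  set S : ℝ := (z.re - z'.re)^2 + z.im^2 + z'.im^2 with hS
  have hSpos : 0 < S := by positivity
  have hcosh : Real.cosh (dist z z') = S / (2 * z.im * z'.im) := by
    rw [UpperHalfPlane.cosh_dist]
    have hsq : dist (z : ℂ) (z' : ℂ) ^ 2 = (z.re - z'.re)^2 + (z.im - z'.im)^2 := by
      rw [Complex.dist_eq, Complex.sq_norm, Complex.normSq_apply]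
      simp only [Complex.sub_re, Complex.sub_im, coe_re, coe_im]
      ring
    rw [hsq, hS]
    field_simp
    ring
  have hd0 : 0 ≤ dist z z' := dist_nonneg
  have hexp_le : Real.exp (dist z z') ≤ 2 * Real.cosh (dist z z') := by
    rw [Real.cosh_eq]
    have := (Real.exp_pos (-(dist z z'))).le
    linarith
  have hcosh_le : Real.cosh (dist z z') ≤ Real.exp (dist z z') := by
    rw [Real.cosh_eq]
    have := Real.exp_le_exp.mpr (neg_le_self hd0)
    linarith
  have hQpos : 0 < M^2 / (z.im * z'.im) := by positivity
  have hQ : 2 * Real.log M - Real.log z.im - Real.log z'.im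
      = Real.log (M^2 / (z.im * z'.im)) := by
    rw [Real.log_div (by positivity) (by positivity), Real.log_mul hy.ne' hy'.ne',
      Real.log_pow]
    push_cast
    ring
  rw [hQ, abs_le]
  constructor
  · -- -(log 4) ≤ dist - log Q  ⇔  log Q ≤ log 4 + dist
    have h1 : M^2 / (z.im * z'.im) ≤ 4 * Real.exp (dist z z') := by
      have e1 : 2 * S / (z.im * z'.im) = 4 * Real.cosh (dist z z') := by
        rw [hcosh]; field_simp; ring
      have e2 : M^2 / (z.im * z'.im) ≤ 2 * S / (z.im * z'.im) := by
        gcongr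
      linarith
    have h2 := Real.log_le_log hQpos h1
    rw [Real.log_mul (by norm_num) (Real.exp_pos _).ne', Real.log_exp] at h2
    linarith
  · -- dist - log Q ≤ log 4
    have h1 : Real.exp (dist z z') ≤ 4 * (M^2 / (z.im * z'.im)) := by
      have e1 : 2 * Real.cosh (dist z z') = S / (z.im * z'.im) := by
        rw [hcosh]; field_simp
      have e2 : S / (z.im * z'.im) ≤ 4 * (M^2 / (z.im * z'.im)) := by
        rw [div_le_iff₀ (by positivity)]
        have : 4 * (M ^ 2 / (z.im * z'.im)) * (z.im * z'.im) = 4 * M^2 := by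
          field_simp
        rw [this]
        exact hA
      linarith
    have h2 := Real.log_le_log (Real.exp_pos _) h1
    rw [Real.log_mul (by norm_num) hQpos.ne', Real.log_exp] at h2
    linarith
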